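/- Let V be a finite-dimensional real vector space and B a nondegenerate symmetric bilinear form on V. Let f : V → V be a linear map which is an isometry of B, i.e. B(f x, f y) = B(x, y) for all x, y ∈ V, and suppose there exists a nonzero linear functional φ : V → ℝ such that f x = x for every x in the kernel of φ. Then either f is the identity, or there exists a vector e ∈ V with B(e, e) ≠ 0 such that f x = x − (2·B(e, x)/B(e, e))·e for all x ∈ V. (This is the linear-algebra fact underlying Corollary 5.9: an isometry fixing a hyperplane pointwise is the identity or a reflection in an anisotropic vector.) -/

import Mathlib

/-- An isometry of a nondegenerate symmetric bilinear form on a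
finite-dimensional real vector space which fixes pointwise the kernel of a
nonzero linear functional is either the identity or the reflection in some
anisotropic vector `e`. -/
theorem isometry_fixing_hyperplane_eq_id_or_reflection
    (V : Type*) [AddCommGroup V] [Module ℝ V] [FiniteDimensional ℝ V]
    (B : LinearMap.BilinForm ℝ V)
    (hBsymm : ∀ x y : V, B x y = B y x)
    (hBnd : ∀ x : V, (∀ y : V, B x y = 0) → x = 0)
    (f : V →ₗ[ℝ] V)
    (hf : ∀ x y : V, B (f x) (f y) = B x y)
    (φ : V →ₗ[ℝ] ℝ) (hφ : φ ≠ 0)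
    (hfix : ∀ x : V, φ x = 0 → f x = x) :
    (∀ x : V, f x = x) ∨
      ∃ e : V, B e e ≠ 0 ∧ ∀ x : V, f x = x - (2 * B e x / B e e) • e := by
  obtain ⟨u, hu⟩ := DFunLike.ne_iff.mp hφ
  have hu' : φ u ≠ 0 := by simpa using hu
  set v := (φ u)⁻¹ • u with hv
  have hφv : φ v = 1 := by
    rw [hv, map_smul, smul_eq_mul, inv_mul_cancel₀ hu']
  set w := f v - v with hw
  have hfv : f v = v + w := by rw [hw]; abel
  have key : ∀ x, f x = x + φ x • w := by
    intro x
    have h1 : φ (x - φ x • v) = 0 := by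
      rw [map_sub, map_smul, smul_eq_mul, hφv, mul_one, sub_self]
    have h2 : f x - φ x • f v = x - φ x • v := by
      simpa [map_sub, map_smul] using hfix _ h1
    have h3 : f x = x - φ x • v + φ x • f v := by
      rw [← h2]; abel
    rw [h3, hfv, smul_add]; abel
  by_cases hw0 : w = 0
  · left; intro x; simp [key x, hw0]
  · right
    have hBwy : ∀ y, φ y = 0 → B w y = 0 := by
      intro y hy
      have h := hf v y
      rw [hfix y hy, hfv, map_add, LinearMap.add_apply] at h
      linarith
    set c := B w v with hc
    have hBwx : ∀ x, B w x = c * φ x := by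
      intro x
      have h0 := hBwy (x - φ x • v)
        (by rw [map_sub, map_smul, smul_eq_mul, hφv, mul_one, sub_self])
      rw [map_sub, map_smul, smul_eq_mul] at h0
      linarith [h0]
    have hcne : c ≠ 0 := by
      intro h
      apply hw0
      apply hBnd
      intro y
      rw [hBwx y, h, zero_mul]
    have hφw : φ w = -2 := by
      have h := hf v v
      simp only [hfv, map_add, LinearMap.add_apply] at h
      have h1 : B v w = c := (hBsymm v w).trans hc.symm
      have h2 : B w w = c * φ w := hBwx w
      have h3 : c * (2 + φ w) = 0 := by
        nlinarith [h, h1, h2, hc]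
      rcases mul_eq_zero.mp h3 with h4 | h4
      · exact absurd h4 hcne
      · linarith
    have hBee : B w w = -2 * c := by rw [hBwx w, hφw]; ring
    refine ⟨w, ?_, ?_⟩
    · rw [hBee]; intro h; apply hcne; linarith
    · intro x
      rw [key x, hBwx x, hBee]
      have hq : 2 * (c * φ x) / (-2 * c) = -φ x := by
        field_simp
      rw [hq, neg_smul, sub_neg_eq_add]
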